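/- Let f : Ω_+ + e → ℝ be continuous with f(x) + f(y) = f(P(x^{1/2})y) for all x, y ∈ Ω_+ + e, where Ω_+ + e = {x ∈ Ω_+ : x − e ∈ Ω_+}. For x ∈ Ω_+ let t_x = 2/λ_min(x), where λ_min(x) is the smallest eigenvalue of x, and define the extension f̄ : Ω_+ → ℝ by f̄(x) = f(x) if x ∈ Ω_+ + e and f̄(x) = f(t_x·x) − f(t_x·e) otherwise. Then f̄(x) + f̄(y) = f̄(P(x^{1/2})y) for all x, y ∈ Ω_+. -/

import Mathlib

open Matrix

abbrev Mat (r : ℕ) : Type := Matrix (Fin r) (Fin r) ℝ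

open Classical in
/-- the square root of a positive semidefinite matrix (junk value `0` otherwise) -/
noncomputable def msqrt {r : ℕ} (x : Mat r) : Mat r :=
  if h : x.PosSemidef then
    h.1.eigenvectorUnitary.1 * diagonal ((RCLike.ofReal : ℝ → ℝ) ∘ (√·) ∘ h.1.eigenvalues) *
      (star h.1.eigenvectorUnitary : Mat r)
  else 0

open Classical in
/-- the smallest eigenvalue of a Hermitian (symmetric) matrix (junk value `0` otherwise) -/
noncomputable def lamMin {r : ℕ} (x : Mat r) : ℝ :=
  if h : x.IsHermitian then ⨅ i, h.eigenvalues i else 0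

/-- the shifted cone `Ω₊ + e = {x ∈ Ω₊ : x - e ∈ Ω₊}` -/
def shiftedCone (r : ℕ) : Set (Mat r) := {x | x.PosDef ∧ (x - 1).PosDef}

variable {r : ℕ}

lemma posSemidef_smul' {x : Mat r} (hx : x.PosSemidef) {t : ℝ} (ht : 0 ≤ t) :
    (t • x).PosSemidef := by
  rw [posSemidef_iff_dotProduct_mulVec]
  refine ⟨?_, fun v => ?_⟩
  · unfold Matrix.IsHermitian
    rw [conjTranspose_smul, hx.1.eq, star_trivial]
  · rw [smul_mulVec, dotProduct_smul, smul_eq_mul]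
    exact mul_nonneg ht (hx.dotProduct_mulVec_nonneg v)

lemma posDef_smul' {x : Mat r} (hx : x.PosDef) {t : ℝ} (ht : 0 < t) :
    (t • x).PosDef := by
  rw [posDef_iff_dotProduct_mulVec]
  refine ⟨?_, fun v hv => ?_⟩
  · unfold Matrix.IsHermitian
    rw [conjTranspose_smul, hx.1.eq, star_trivial]
  · rw [smul_mulVec, dotProduct_smul, smul_eq_mul]
    exact mul_pos ht (hx.dotProduct_mulVec_pos hv)

lemma posDef_conj' {a b : Mat r} (ha : a.PosDef)
    (hb : Function.Injective (Matrix.mulVec bᴴ)) : (b * a * bᴴ).PosDef := by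
  rw [posDef_iff_dotProduct_mulVec]
  refine ⟨?_, fun v hv => ?_⟩
  · unfold Matrix.IsHermitian
    rw [conjTranspose_mul, conjTranspose_mul, conjTranspose_conjTranspose, ha.1.eq, mul_assoc]
  · have h1 : (b * a * bᴴ) *ᵥ v = b *ᵥ (a *ᵥ (bᴴ *ᵥ v)) := by
      rw [← mulVec_mulVec, ← mulVec_mulVec]
    have h2 : star v ⬝ᵥ (b *ᵥ (a *ᵥ (bᴴ *ᵥ v))) = star (bᴴ *ᵥ v) ⬝ᵥ (a *ᵥ (bᴴ *ᵥ v)) := by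
      have hst : star (bᴴ *ᵥ v) = star v ᵥ* b := by
        rw [star_mulVec, conjTranspose_conjTranspose]
      rw [dotProduct_mulVec (star v) b, ← hst]
    have hv' : bᴴ *ᵥ v ≠ 0 := by
      intro h
      apply hv
      apply hb
      rw [h, mulVec_zero]
    rw [h1, h2]
    exact ha.dotProduct_mulVec_pos hv'

lemma star_unitary_mulVec_injective {U : Mat r} (hU : U ∈ Matrix.unitaryGroup (Fin r) ℝ) :
    Function.Injective (Matrix.mulVec (star U)) := by
  intro v w h
  have : U *ᵥ (star U *ᵥ v) = U *ᵥ (star U *ᵥ w) := by rw [h]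
  rwa [mulVec_mulVec, mulVec_mulVec, (Matrix.mem_unitaryGroup_iff.mp hU : U * star U = 1),
    one_mulVec, one_mulVec] at this

/-- If `t * λᵢ > 1` for all eigenvalues `λᵢ` of a symmetric matrix `x`, then `t • x - 1`
is positive definite. -/
lemma smul_sub_one_posDef {x : Mat r} (hx : x.IsHermitian) {t : ℝ}
    (h : ∀ i, 1 < t * hx.eigenvalues i) : (t • x - 1).PosDef := by
  classical
  set U : Mat r := (Matrix.IsHermitian.eigenvectorUnitary hx : Mat r) with hUdef
  have hspec : x = U * Matrix.diagonal (RCLike.ofReal ∘ hx.eigenvalues) * star U :=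
    hx.spectral_theorem
  have hUU : U * star U = 1 := Matrix.mem_unitaryGroup_iff.mp (hx.eigenvectorUnitary).2
  have key : t • x - 1 = U * Matrix.diagonal (fun i => t * hx.eigenvalues i - 1) * star U := by
    have hd : Matrix.diagonal (fun i => t * hx.eigenvalues i - 1)
        = t • Matrix.diagonal (RCLike.ofReal ∘ hx.eigenvalues) - 1 := by
      rw [← Matrix.diagonal_smul, ← Matrix.diagonal_one, ← Matrix.diagonal_sub]
      congr 1
    rw [hd, Matrix.mul_sub, Matrix.sub_mul, Matrix.mul_one, hUU, mul_smul_comm, smul_mul_assoc,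
      ← hspec]
  rw [key]
  refine posDef_conj' ?_ (star_unitary_mulVec_injective (hx.eigenvectorUnitary).2)
  rw [Matrix.posDef_diagonal_iff]
  intro i
  linarith [h i]

open scoped MatrixOrder in
lemma msqrt_eq_cfc {x : Mat r} (hx : x.PosSemidef) : msqrt x = CFC.sqrt x := by
  have h0 : (0 : Mat r) ≤ x := Matrix.nonneg_iff_posSemidef.mpr hx
  rw [CFC.sqrt_eq_real_sqrt x h0,
    cfcₙ_eq_cfc (hf := Real.continuous_sqrt.continuousOn) (hf0 := Real.sqrt_zero), hx.1.cfc_eq, Matrix.IsHermitian.cfc, msqrt, dif_pos hx,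
    Unitary.conjStarAlgAut_apply]

open scoped MatrixOrder in
lemma msqrt_mul_self {x : Mat r} (hx : x.PosSemidef) : msqrt x * msqrt x = x := by
  rw [msqrt_eq_cfc hx]
  exact CFC.sqrt_mul_sqrt_self x (Matrix.nonneg_iff_posSemidef.mpr hx)

open scoped MatrixOrder in
lemma msqrt_isHermitian {x : Mat r} (hx : x.PosSemidef) : (msqrt x).IsHermitian := by
  rw [msqrt_eq_cfc hx]
  exact (Matrix.nonneg_iff_posSemidef.mp (CFC.sqrt_nonneg x)).1

open scoped MatrixOrder in
lemma msqrt_posSemidef {x : Mat r} (hx : x.PosSemidef) : (msqrt x).PosSemidef := by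
  rw [msqrt_eq_cfc hx]
  exact Matrix.nonneg_iff_posSemidef.mp (CFC.sqrt_nonneg x)

lemma msqrt_isUnit {x : Mat r} (hx : x.PosDef) : IsUnit (msqrt x) := by
  rw [Matrix.isUnit_iff_isUnit_det]
  have h : (msqrt x).det * (msqrt x).det = x.det := by
    rw [← Matrix.det_mul, msqrt_mul_self hx.posSemidef]
  refine isUnit_iff_ne_zero.mpr fun h0 => ?_
  rw [h0, mul_zero] at h
  exact hx.det_pos.ne' h.symm

lemma msqrt_mulVec_injective {x : Mat r} (hx : x.PosDef) :
    Function.Injective (Matrix.mulVec (msqrt x)ᴴ) := by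
  rw [(msqrt_isHermitian hx.posSemidef).eq]
  exact Matrix.mulVec_injective_iff_isUnit.mpr (msqrt_isUnit hx)

lemma sandwich_posDef {x y : Mat r} (hx : x.PosDef) (hy : y.PosDef) :
    (msqrt x * y * msqrt x).PosDef := by
  have h := posDef_conj' hy (msqrt_mulVec_injective hx)
  rwa [(msqrt_isHermitian hx.posSemidef).eq] at h

open scoped MatrixOrder in
lemma msqrt_smul {x : Mat r} (hx : x.PosSemidef) {t : ℝ} (ht : 0 ≤ t) :
    msqrt (t • x) = Real.sqrt t • msqrt x := by
  have htx : (t • x).PosSemidef := posSemidef_smul' hx ht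
  have hs : (Real.sqrt t • msqrt x).PosSemidef :=
    posSemidef_smul' (msqrt_posSemidef hx) (Real.sqrt_nonneg t)
  have hsq : (Real.sqrt t • msqrt x) ^ 2 = t • x := by
    rw [pow_two, smul_mul_assoc, mul_smul_comm, smul_smul, Real.mul_self_sqrt ht,
      msqrt_mul_self hx]
  rw [msqrt_eq_cfc htx]
  exact CFC.sqrt_unique (by rw [← pow_two]; exact hsq) (Matrix.nonneg_iff_posSemidef.mpr hs)

lemma lamMin_eq {x : Mat r} (hx : x.IsHermitian) : lamMin x = ⨅ i, hx.eigenvalues i := by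
  rw [lamMin, dif_pos hx]

lemma lamMin_pos (hr : 1 ≤ r) {x : Mat r} (hx : x.PosDef) : 0 < lamMin x := by
  have : Nonempty (Fin r) := ⟨⟨0, hr⟩⟩
  rw [lamMin_eq hx.1]
  obtain ⟨i, hi⟩ := exists_eq_ciInf_of_finite (f := hx.1.eigenvalues)
  rw [← hi]
  exact hx.eigenvalues_pos i

lemma lamMin_le {x : Mat r} (hx : x.IsHermitian) (i : Fin r) :
    lamMin x ≤ hx.eigenvalues i := by
  rw [lamMin_eq hx]
  exact ciInf_le (Set.Finite.bddBelow (Set.finite_range _)) i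

lemma smul_sub_one_posDef_of_le (hr : 1 ≤ r) {x : Mat r} (hx : x.PosDef) {c : ℝ}
    (hc : 2 / lamMin x ≤ c) : (c • x - 1).PosDef := by
  have hl : 0 < lamMin x := lamMin_pos hr hx
  refine smul_sub_one_posDef hx.1 fun i => ?_
  have h1 : lamMin x ≤ hx.1.eigenvalues i := lamMin_le hx.1 i
  have h2 : (2 / lamMin x) * lamMin x = 2 := div_mul_cancel₀ 2 hl.ne'
  have h3 : 0 < 2 / lamMin x := by positivity
  nlinarith [hx.eigenvalues_pos i]

lemma two_le_scale_of_not_posDef (hr : 1 ≤ r) {x : Mat r} (hx : x.PosDef)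
    (h : ¬ (x - 1).PosDef) : 2 ≤ 2 / lamMin x := by
  have hl : 0 < lamMin x := lamMin_pos hr hx
  have hle : lamMin x ≤ 1 := by
    by_contra hgt
    push_neg at hgt
    refine h ?_
    have h2 := smul_sub_one_posDef hx.1 (t := 1) fun i => by
      have := lamMin_le hx.1 i
      rw [one_mul]; linarith
    rwa [one_smul] at h2
  rw [le_div_iff₀ hl]
  linarith

open Classical in
/-- **Extension of a multiplicative-Cauchy-type functional equation from `Ω₊ + e`
to the whole cone `Ω₊`.**  If continuous `f` on `Ω₊ + e` satisfies
`f(x) + f(y) = f(P(x^{1/2})y)` there, then its extension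
`f̄(x) = f(x)` for `x ∈ Ω₊ + e`, `f̄(x) = f(tₓ x) - f(tₓ e)` otherwise (`tₓ = 2/λ_min(x)`),
satisfies the same equation on all of `Ω₊`. -/
theorem extension_satisfies_equation {r : ℕ} (hr : 1 ≤ r) (f : Mat r → ℝ)
    (hcont : ContinuousOn f (shiftedCone r))
    (heq : ∀ x ∈ shiftedCone r, ∀ y ∈ shiftedCone r,
      f x + f y = f (msqrt x * y * msqrt x))
    (fbar : Mat r → ℝ)
    (hfbar : fbar = fun x =>
      if (x - 1).PosDef then f x
      else f ((2 / lamMin x) • x) - f ((2 / lamMin x) • (1 : Mat r))) :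
    ∀ x y : Mat r, x.PosDef → y.PosDef →
      fbar x + fbar y = fbar (msqrt x * y * msqrt x) := by
  have hfb : ∀ w : Mat r, fbar w = if (w - 1).PosDef then f w
      else f ((2 / lamMin w) • w) - f ((2 / lamMin w) • (1 : Mat r)) := fun w => by rw [hfbar]
  have hone : (1 : Mat r).PosDef := Matrix.PosDef.one
  -- scaled identity matrices lie in the shifted cone
  have mem1 : ∀ s : ℝ, 1 < s → (s • (1 : Mat r)) ∈ shiftedCone r := by
    intro s hs
    refine ⟨posDef_smul' hone (by linarith), ?_⟩
    have h : s • (1 : Mat r) - 1 = (s - 1) • (1 : Mat r) := by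
      rw [sub_smul, one_smul]
    rw [h]
    exact posDef_smul' hone (by linarith)
  -- A : scaling inside the cone
  have A : ∀ u ∈ shiftedCone r, ∀ s : ℝ, 1 < s →
      f u + f (s • (1 : Mat r)) = f (s • u) := by
    intro u hu s hs
    have h := heq u hu (s • (1 : Mat r)) (mem1 s hs)
    have hcalc : msqrt u * (s • (1 : Mat r)) * msqrt u = s • u := by
      rw [mul_smul_comm, Matrix.mul_one, smul_mul_assoc, msqrt_mul_self hu.1.posSemidef]
    rwa [hcalc] at h
  -- membership of scalings
  have memS : ∀ x : Mat r, x.PosDef → ∀ s : ℝ, 2 / lamMin x ≤ s → 1 < s →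
      (s • x) ∈ shiftedCone r := fun x hx s h1 h2 =>
    ⟨posDef_smul' hx (by linarith), smul_sub_one_posDef_of_le hr hx h1⟩
  -- B : independence of the scaling factor
  have B : ∀ x : Mat r, x.PosDef → ∀ s t : ℝ, 1 < s → 1 < t →
      (s • x) ∈ shiftedCone r → (t • x) ∈ shiftedCone r →
      f (s • x) - f (s • (1 : Mat r)) = f (t • x) - f (t • (1 : Mat r)) := by
    intro x hx s t hs ht hsx htx
    have h1 := A (s • x) hsx t ht
    have h2 := A (t • x) htx s hs
    rw [smul_smul] at h1 h2
    rw [mul_comm t s] at h1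
    linarith
  -- C : the value of the extension via any admissible scaling
  have C : ∀ x : Mat r, x.PosDef → ∀ t : ℝ, 1 < t → (t • x) ∈ shiftedCone r →
      (if (x - 1).PosDef then f x
        else f ((2 / lamMin x) • x) - f ((2 / lamMin x) • (1 : Mat r)))
        = f (t • x) - f (t • (1 : Mat r)) := by
    intro x hx t ht htx
    by_cases hxc : (x - 1).PosDef
    · rw [if_pos hxc]
      have h := A x ⟨hx, hxc⟩ t ht
      linarith
    · rw [if_neg hxc]
      have h2 : 2 ≤ 2 / lamMin x := two_le_scale_of_not_posDef hr hx hxc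
      exact B x hx _ t (by linarith) ht (memS x hx _ le_rfl (by linarith)) htx
  -- main computation
  intro x y hx hy
  set z : Mat r := msqrt x * y * msqrt x with hz
  have hzpd : z.PosDef := sandwich_posDef hx hy
  set t : ℝ := max 2 (max (2 / lamMin x) (max (2 / lamMin y) (2 / lamMin z))) with htdef
  have ht2 : (2 : ℝ) ≤ t := le_max_left _ _
  have ht1 : (1 : ℝ) < t := by linarith
  have ht0 : (0 : ℝ) ≤ t := by linarith
  have httz : 2 / lamMin z ≤ t * t := by
    have h1 : 2 / lamMin z ≤ t :=
      le_trans (le_trans (le_max_right _ _) (le_max_right _ _)) (le_max_right _ _)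
    nlinarith
  have htx : (t • x) ∈ shiftedCone r :=
    memS x hx t (le_trans (le_max_left _ _) (le_max_right _ _)) ht1
  have hty : (t • y) ∈ shiftedCone r :=
    memS y hy t (le_trans (le_trans (le_max_left _ _) (le_max_right _ _)) (le_max_right _ _)) ht1
  have htz : ((t * t) • z) ∈ shiftedCone r := memS z hzpd (t * t) httz (by nlinarith)
  have hX := C x hx t ht1 htx
  have hY := C y hy t ht1 hty
  have hZ := C z hzpd (t * t) (by nlinarith) htz
  -- (i) : f (t•x) + f (t•y) = f ((t*t) • z)
  have hi := heq (t • x) htx (t • y) hty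
  have hss : Real.sqrt t * Real.sqrt t = t := Real.mul_self_sqrt ht0
  have hcalc : msqrt (t • x) * (t • y) * msqrt (t • x) = (t * t) • z := by
    rw [msqrt_smul hx.posSemidef ht0, hz]
    simp only [smul_mul_assoc, mul_smul_comm, smul_smul]
    congr 1
    nlinarith
  rw [hcalc] at hi
  -- (ii) : f (t•1) + f (t•1) = f ((t*t) • 1)
  have hii := A (t • (1 : Mat r)) (mem1 t ht1) t ht1
  rw [smul_smul] at hii
  -- conclude
  rw [hfb x, hfb y, hfb z, hX, hY, hZ]
  linarith
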